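/- Assuming countable choice: for any a ∈ ℕ* and U ⊆ ℕ*, U ∈ Cov(a) if and only if there exists a Brouwer-operation γ ∈ K with a ⌢ bar(γ) = U, where a ⌢ bar(γ) = { a⌢b | b ∈ bar(γ) }. In particular, U ∈ Cov(⟨⟩) if and only if U = bar(γ) for some γ ∈ K. -/
import Mathlib


/-- Initial segment of `α` of length `n`. -/
def seg (α : ℕ → ℕ) (n : ℕ) : List ℕ := List.ofFn (fun i : Fin n => α i)

/-- `a` followed by the constant zero sequence. -/
def zext (a : List ℕ) : ℕ → ℕ := fun i => a.getD i 0

/-- Upward closure under extension. -/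
def extU (U : Set (List ℕ)) : Set (List ℕ) := {a | ∃ b ∈ U, b <+: a}

/-- The cover of formal Baire space, generated by η, ζ, ϝ. -/
inductive Cover : List ℕ → Set (List ℕ) → Prop
  | eta {a : List ℕ} {U : Set (List ℕ)} : a ∈ U → Cover a U
  | zeta {a : List ℕ} {U : Set (List ℕ)} (k : ℕ) : Cover a U → Cover (a ++ [k]) U
  | digamma {a : List ℕ} {U : Set (List ℕ)} : (∀ n, Cover (a ++ [n]) U) → Cover a U

/-- A spread: a decidable tree where every node has a child. -/
def IsSpread (T : Set (List ℕ)) : Prop :=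
  (∀ a, a ∈ T ∨ a ∉ T) ∧ (∀ a b : List ℕ, a <+: b → b ∈ T → a ∈ T) ∧
  (∀ a ∈ T, ∃ n, a ++ [n] ∈ T)

/-- A fan: a finitely branching spread. -/
def IsFan (T : Set (List ℕ)) : Prop :=
  IsSpread T ∧ ∀ a ∈ T, ∃ N, ∀ n, a ++ [n] ∈ T → n ≤ N

/-- `α` is a path in the tree `T`. -/
def IsPath (T : Set (List ℕ)) (α : ℕ → ℕ) : Prop := ∀ n, seg α n ∈ T

/-- A c-bar: a c-set barring every sequence. -/
def IsCBar (P : Set (List ℕ)) : Prop :=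
  (∃ δ : List ℕ → ℕ, ∀ a, a ∈ P ↔ ∀ b, δ a = δ (a ++ b)) ∧
  (∀ α : ℕ → ℕ, ∃ n, seg α n ∈ P)

/-- Pointwise continuity for `F : ℕ^ℕ → ℕ`. -/
def PtwiseCts (F : (ℕ → ℕ) → ℕ) : Prop :=
  ∀ α : ℕ → ℕ, ∃ n, ∀ β : ℕ → ℕ, seg β n = seg α n → F β = F α

/-- An inductive subset of ℕ*. -/
def Inductive (Q : Set (List ℕ)) : Prop := ∀ a, (∀ n, a ++ [n] ∈ Q) → a ∈ Q

/-- Preimage of a subset of ℕ under a relation r ⊆ ℕ* × ℕ. -/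
def rInv (r : List ℕ → ℕ → Prop) (D : Set ℕ) : Set (List ℕ) := {a | ∃ n ∈ D, r a n}

/-- Formal topology map from formal Baire space to formal natural numbers. -/
def IsFTopMap (r : List ℕ → ℕ → Prop) : Prop :=
  Cover [] (rInv r Set.univ) ∧
  ∀ n m : ℕ, ∀ a ∈ extU (rInv r {n}) ∩ extU (rInv r {m}),
    Cover a (rInv r {l | l = n ∧ n = m})

/-- `F` is formally continuous: induced by a formal topology map on points. -/
def FormallyCts (F : (ℕ → ℕ) → ℕ) : Prop :=
  ∃ r : List ℕ → ℕ → Prop, IsFTopMap r ∧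
    ∀ α : ℕ → ℕ, {n | ∃ k, r (seg α k) n} = {F α}

/-- The class of Brouwer-operations. -/
inductive IsBrouwerOp : (List ℕ → ℕ) → Prop
  | const (n : ℕ) : IsBrouwerOp (fun _ => n + 1)
  | sup {γ : List ℕ → ℕ} : γ [] = 0 →
      (∀ n, IsBrouwerOp (fun a => γ (n :: a))) → IsBrouwerOp γ

/-- `bar γ`: minimal sequences on which `γ` is positive. -/
def barOf (γ : List ℕ → ℕ) : Set (List ℕ) :=
  {a | 0 < γ a ∧ ∀ b : List ℕ, b <+: a → b ≠ a → γ b = 0}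

/-- The set presentation `Cov` of formal Baire space. -/
inductive Cov : List ℕ → Set (List ℕ) → Prop
  | single (a : List ℕ) : Cov a {a}
  | union {a : List ℕ} {U : ℕ → Set (List ℕ)} :
      (∀ n, Cov (a ++ [n]) (U n)) → Cov a (⋃ n, U n)

lemma barOf_const (n : ℕ) : barOf (fun _ => n + 1) = {[]} := by
  ext a
  simp only [barOf, Set.mem_setOf_eq, Set.mem_singleton_iff]
  constructor
  · rintro ⟨-, h⟩
    by_contra hne
    exact Nat.succ_ne_zero n (h [] (List.nil_prefix) (Ne.symm hne))
  · rintro rfl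
    refine ⟨Nat.succ_pos n, fun b hb hne => absurd (List.prefix_nil.mp hb) hne⟩

lemma barOf_cons {γ : List ℕ → ℕ} (h0 : γ [] = 0) :
    barOf γ = ⋃ n, (fun b => n :: b) '' barOf (fun a => γ (n :: a)) := by
  ext a
  simp only [Set.mem_iUnion, Set.mem_image, barOf, Set.mem_setOf_eq]
  constructor
  · rintro ⟨hpos, hmin⟩
    cases a with
    | nil => omega
    | cons n b =>
      refine ⟨n, b, ⟨hpos, fun c hc hne => ?_⟩, rfl⟩
      exact hmin (n :: c) (List.cons_prefix_cons.mpr ⟨rfl, hc⟩) (by simpa using hne)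
  · rintro ⟨n, b, ⟨hpos, hmin⟩, rfl⟩
    refine ⟨hpos, fun c hc hne => ?_⟩
    cases c with
    | nil => exact h0
    | cons m c =>
      obtain ⟨rfl, hc'⟩ := List.cons_prefix_cons.mp hc
      exact hmin c hc' (by simpa using hne)

lemma cov_of_brouwer {γ : List ℕ → ℕ} (h : IsBrouwerOp γ) :
    ∀ a, Cov a ((fun b => a ++ b) '' barOf γ) := by
  induction h with
  | const n =>
    intro a
    have : (fun b => a ++ b) '' barOf (fun _ => n + 1) = {a} := by
      rw [barOf_const]; simp
    rw [this]
    exact Cov.single a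
  | @sup γ h0 _ ih =>
    intro a
    have heq : (fun b => a ++ b) '' barOf γ =
        ⋃ n, (fun b => (a ++ [n]) ++ b) '' barOf (fun c => γ (n :: c)) := by
      rw [barOf_cons h0, Set.image_iUnion]
      apply Set.iUnion_congr; intro n
      rw [← Set.image_comp]
      apply Set.image_congr; intro b _; simp
    rw [heq]
    exact Cov.union fun n => ih n (a ++ [n])

theorem cov_iff_brouwerOp_bar :
    (∀ (a : List ℕ) (U : Set (List ℕ)),
      Cov a U ↔ ∃ γ : List ℕ → ℕ, IsBrouwerOp γ ∧ (fun b => a ++ b) '' barOf γ = U) ∧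
    (∀ U : Set (List ℕ),
      Cov [] U ↔ ∃ γ : List ℕ → ℕ, IsBrouwerOp γ ∧ barOf γ = U) := by
  have main : ∀ (a : List ℕ) (U : Set (List ℕ)),
      Cov a U ↔ ∃ γ : List ℕ → ℕ, IsBrouwerOp γ ∧ (fun b => a ++ b) '' barOf γ = U := by
    intro a U
    constructor
    · intro h
      induction h with
      | single a =>
        refine ⟨fun _ => 1, IsBrouwerOp.const 0, ?_⟩
        rw [barOf_const]; simp
      | @union a V _ ih =>
        choose γ hγ hbar using ih
        refine ⟨fun l => match l with | [] => 0 | n :: b => γ n b,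
          IsBrouwerOp.sup rfl (fun n => hγ n), ?_⟩
        have heq : barOf (fun l => match l with | [] => 0 | n :: b => γ n b) =
            ⋃ n, (fun b => n :: b) '' barOf (γ n) := barOf_cons rfl
        rw [heq, Set.image_iUnion]
        apply Set.iUnion_congr; intro n
        rw [← Set.image_comp, ← hbar n]
        apply Set.image_congr; intro b _; simp
    · rintro ⟨γ, hγ, rfl⟩
      exact cov_of_brouwer hγ a
  refine ⟨main, fun U => ?_⟩
  rw [main [] U]
  constructor <;> rintro ⟨γ, hγ, h⟩ <;> exact ⟨γ, hγ, by simpa using h⟩
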